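/- Let Z be the structure algebra over a flat S-algebra T, and let M be a root torsion free Z-module (multiplication by α^∨ is injective on M for all α ∈ R⁺). If {L_i}_{i∈I} is a finite family of subsets of V with V = ⋃_i L_i, then the direct sum of the canonical quotient maps p^{L_i}: M → M^{L_i} = Z^{L_i} ⊗_Z M is injective. -/

import Mathlib

noncomputable section

variable {T : Type*} [CommRing T] {V : Type*} {I : Type*} [Fintype I]

/-- The structure algebra `Z` over the base ring `T`: tuples `z : V → T` with
`z_x ≡ z_{s_α x} (mod α^∨)` for all `x ∈ V` and positive roots `α` (indexed by `I`,
with reflection action `s : I → V → V` and coroots `c : I → T`). -/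
def StructAlg (s : I → V → V) (c : I → T) : Subalgebra T (V → T) where
  carrier := {z | ∀ (i : I) (x : V), c i ∣ z x - z (s i x)}
  mul_mem' := by
    intro a b ha hb i x
    have h : (a * b) x - (a * b) (s i x)
        = a x * (b x - b (s i x)) + (a x - a (s i x)) * b (s i x) := by
      simp only [Pi.mul_apply]; ring
    rw [h]
    exact dvd_add ((hb i x).mul_left _) ((ha i x).mul_right _)
  one_mem' := by intro i x; simp
  add_mem' := by
    intro a b ha hb i x
    have h : (a + b) x - (a + b) (s i x)
        = (a x - a (s i x)) + (b x - b (s i x)) := by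
      simp only [Pi.add_apply]; ring
    rw [h]
    exact dvd_add (ha i x) (hb i x)
  zero_mem' := by intro i x; simp
  algebraMap_mem' := by intro t i x; simp

/-- The coroot `α^∨`, viewed as the constant tuple in the structure algebra. -/
def corootConst (s : I → V → V) (c : I → T) (i : I) : StructAlg s c :=
  ⟨fun _ => c i, by intro j x; simp⟩

/-- The coordinate restriction homomorphism `(V → T) → (L → T)`. -/
def restrictHom (L : Set V) : (V → T) →+* (L → T) :=
  Pi.ringHom fun x : L => Pi.evalRingHom (fun _ : V => T) (x : V)

/-- The kernel of `Z → Z^L`, the projection of the structure algebra to the coordinates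
in `L`; so `M^L = Z^L ⊗_Z M` identifies with `M / (suppIdeal L) M`. -/
def suppIdeal (s : I → V → V) (c : I → T) (L : Set V) : Ideal (StructAlg s c) :=
  RingHom.ker ((restrictHom L).comp (StructAlg s c).val.toRingHom)

open Classical in
/-- The function equal to `∏ i, c i` on `L` and `0` elsewhere; it lies in the structure
algebra. -/
def cutFun (s : I → V → V) (c : I → T) (L : Set V) : StructAlg s c :=
  ⟨fun x => if x ∈ L then ∏ i, c i else 0, by
    intro i x
    by_cases hx : x ∈ L <;> by_cases hy : s i x ∈ L <;>
        simp only [hx, hy, if_true, if_false, ite_true, ite_false, sub_self, sub_zero,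
          zero_sub, dvd_zero, dvd_neg] <;>
      exact Finset.dvd_prod_of_mem c (Finset.mem_univ i)⟩

lemma StructAlg.coe_prod_apply {ι : Type*} (s : I → V → V) (c : I → T)
    (G : Finset ι) (g : ι → StructAlg s c) (x : V) :
    ((∏ j ∈ G, g j : StructAlg s c) : V → T) x = ∏ j ∈ G, ((g j : V → T) x) := by
  classical
  induction G using Finset.induction_on with
  | empty => simp
  | insert a G' hni ih =>
    simp [Finset.prod_insert hni, ih]

lemma cutFun_mul_eq_zero (s : I → V → V) (c : I → T) (L : Set V)
    (z : StructAlg s c) (hz : z ∈ suppIdeal s c L) : cutFun s c L * z = 0 := by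
  classical
  have hz' : ∀ x : L, (z : V → T) (x : V) = 0 := by
    intro x
    have := congrFun hz x
    simp [suppIdeal, restrictHom, RingHom.mem_ker] at this
    exact this
  apply Subtype.ext
  funext x
  by_cases hx : x ∈ L
  · have : (z : V → T) x = 0 := hz' ⟨x, hx⟩
    simp [cutFun, hx, this]
  · simp [cutFun, hx]

lemma cutFun_smul_eq_zero (s : I → V → V) (c : I → T) (L : Set V)
    (M : Type*) [AddCommGroup M] [Module (StructAlg s c) M]
    (m : M) (hm : m ∈ suppIdeal s c L • (⊤ : Submodule (StructAlg s c) M)) :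
    cutFun s c L • m = 0 := by
  refine Submodule.smul_induction_on hm ?_ ?_
  · intro z hz n _
    rw [smul_smul, cutFun_mul_eq_zero s c L z hz, zero_smul]
  · intro x y hx hy
    rw [smul_add, hx, hy, add_zero]

lemma prod_corootConst_smul_injective (s : I → V → V) (c : I → T)
    (M : Type*) [AddCommGroup M] [Module (StructAlg s c) M]
    (hM : ∀ i : I, Function.Injective fun m : M => corootConst s c i • m)
    (F : Finset I) :
    Function.Injective fun m : M => (∏ i ∈ F, corootConst s c i) • m := by
  classical
  induction F using Finset.induction_on with
  | empty => intro m1 m2 h; simpa using h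
  | insert a F' hni ih =>
    intro m1 m2 h
    simp only [Finset.prod_insert hni, mul_smul] at h
    exact ih (hM a h)

/-- Let `M` be a root torsion free module over the structure algebra `Z`
(multiplication by each coroot `α^∨` is injective on `M`).  If `{L_i}` is a finite family
of subsets of `V` covering `V`, then the direct sum of the canonical quotient maps
`p^{L_i} : M → M^{L_i} = Z^{L_i} ⊗_Z M = M/(ker p^{L_i})M` is injective. -/
theorem rtf_module_embeds (s : I → V → V) (c : I → T)
    (M : Type*) [AddCommGroup M] [Module (StructAlg s c) M]
    (hM : ∀ i : I, Function.Injective fun m : M => corootConst s c i • m)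
    {κ : Type*} [Finite κ] (L : κ → Set V) (hL : (⋃ k, L k) = Set.univ) :
    Function.Injective (fun m : M => fun k : κ =>
      (Submodule.Quotient.mk
        (p := suppIdeal s c (L k) • (⊤ : Submodule (StructAlg s c) M)) m)) := by
  classical
  cases nonempty_fintype κ
  set C : StructAlg s c := ∏ i, corootConst s c i with hC
  -- injectivity of powers of C
  have hCinj : ∀ n : ℕ, Function.Injective fun m : M => C ^ n • m := by
    intro n
    induction n with
    | zero => intro m1 m2 h; simpa using h
    | succ n ih =>
      intro m1 m2 h
      simp only [pow_succ, mul_smul] at h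
      exact prod_corootConst_smul_injective s c M hM Finset.univ (ih h)
  intro m1 m2 h
  rw [← sub_eq_zero]
  set m : M := m1 - m2 with hm
  have hmem : ∀ k : κ, m ∈ suppIdeal s c (L k) • (⊤ : Submodule (StructAlg s c) M) := by
    intro k
    rw [← Submodule.Quotient.eq]
    exact congrFun h k
  have hcut : ∀ k : κ, cutFun s c (L k) • m = 0 := fun k =>
    cutFun_smul_eq_zero s c (L k) M m (hmem k)
  -- the product of (C - cutFun (L k)) over all k is zero since the L k cover V
  have hprodzero : (∏ k : κ, (C - cutFun s c (L k))) = 0 := by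
    apply Subtype.ext
    funext x
    obtain ⟨k, hk⟩ : ∃ k, x ∈ L k := by
      have : x ∈ ⋃ k, L k := hL ▸ Set.mem_univ x
      exact Set.mem_iUnion.mp this
    rw [StructAlg.coe_prod_apply]
    refine Finset.prod_eq_zero (Finset.mem_univ k) ?_
    have hCval : (C : V → T) x = ∏ i, c i := by
      rw [hC, StructAlg.coe_prod_apply]
      simp [corootConst]
    simp [hCval, cutFun, hk]
  -- expand the product acting on m
  have hkey : ∀ G : Finset κ, (∏ k ∈ G, (C - cutFun s c (L k))) • m = C ^ G.card • m := by
    intro G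
    induction G using Finset.induction_on with
    | empty => simp
    | insert a G' hni ih =>
      have h0 : cutFun s c (L a) • (C ^ G'.card • m) = 0 := by
        rw [smul_smul, mul_comm, ← smul_smul, hcut a, smul_zero]
      rw [Finset.prod_insert hni, Finset.card_insert_of_notMem hni, mul_smul, ih,
        sub_smul, h0, sub_zero, smul_smul, ← pow_succ']
  have : C ^ (Finset.univ : Finset κ).card • m = 0 := by
    rw [← hkey Finset.univ, hprodzero, zero_smul]
  have h0 : (fun n : M => C ^ (Finset.univ : Finset κ).card • n) m
      = (fun n : M => C ^ (Finset.univ : Finset κ).card • n) 0 := by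
    simpa only [smul_zero] using this
  exact hCinj _ h0
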